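/- Let k ≥ 4 and s ∈ {4,…,k}. The graph F⁺_{enc,s,k}, obtained from the gadget F_{enc,s,k}(u,v,w; y₄,…,y_k) by adding all edges of a clique on {u, v, w, y₄, …, y_k}, is K_{k+2}-minor-free. -/

import Mathlib

/-- `c` is a proper `k`-coloring of `G` with colors in `[k] = {1,…,k}`. -/
def IsProperKColoring {V : Type*} (G : SimpleGraph V) (k : ℕ) (c : V → ℕ) : Prop :=
  (∀ v, c v ∈ Finset.Icc 1 k) ∧ ∀ ⦃x y⦄, G.Adj x y → c x ≠ c y

/-- Index type for the vertices `y₄, …, y_k`. -/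
def Yk (k : ℕ) : Type := {i : ℕ // 4 ≤ i ∧ i ≤ k}

/-- Internal (non-shared) vertices of the pieces of the gadget
`F_{enc,s,k}`.  A pair `(r, i)` denotes the `i`-th internal vertex of the
piece `F_r`; `r = 1` stands for the piece `F₁`, which has internal vertices
`v₁, v₂, w₁, w₂` (indices `0,1,2,3`); the piece `F_s` has internal vertices
`u', w₁, w₂` (indices `0,1,2`); a piece `F_r` with `r ∈ {4,…,k} \ {s}` has
internal vertices `u', v₁, v₂, w₁, w₂` (indices `0,1,2,3,4`). -/
def EncInt (k s : ℕ) : Type :=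
  {p : ℕ × ℕ // (p.1 = 1 ∧ p.2 < 4) ∨
    (4 ≤ p.1 ∧ p.1 ≤ k ∧ ((p.1 = s ∧ p.2 < 3) ∨ (p.1 ≠ s ∧ p.2 < 5)))}

/-- Vertices of `F_{enc,s,k}(u,v,w;y₄,…,y_k)`: the shared vertices `u = 0`,
`v = 1`, `w = 2` and `y₄,…,y_k`, plus the internal vertices of the pieces. -/
def EV (k s : ℕ) : Type := Fin 3 ⊕ Yk k ⊕ EncInt k s

/-- The adjacency (before symmetrization) of the gadget `F_{enc,s,k}`,
obtained by gluing the pieces `F₁, F₄, …, F_k` along `u, v, w, y₄, …, y_k`. -/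
def encRel (k s : ℕ) : EV k s → EV k s → Prop
  | .inl a, .inr (.inl _) => a ≠ 0
  | .inl a, .inr (.inr p) =>
      (p.1.1 = 1 ∧ (a = 0 ∨ (a = 1 ∧ p.1.2 < 2) ∨ (a = 2 ∧ 2 ≤ p.1.2)))
      ∨ (p.1.1 = s ∧ ((a = 0 ∧ p.1.2 = 0) ∨ (a = 1 ∧ p.1.2 = 0) ∨ (a = 2 ∧ p.1.2 ≠ 0)))
      ∨ (4 ≤ p.1.1 ∧ p.1.1 ≠ s ∧ ((a = 0 ∧ p.1.2 = 0) ∨ (a = 1 ∧ (p.1.2 = 1 ∨ p.1.2 = 2))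
          ∨ (a = 2 ∧ (p.1.2 = 3 ∨ p.1.2 = 4))))
  | .inr (.inl j), .inr (.inr p) => ¬(p.1.1 = j.1 ∧ p.1.2 = 0)
  | .inr (.inr p), .inr (.inr q) =>
      p.1.1 = q.1.1 ∧
      ((p.1.1 = 1 ∧ (p.1.2, q.1.2) ∈ ([(0,1),(2,3)] : List (ℕ × ℕ)))
       ∨ (p.1.1 = s ∧ (p.1.2, q.1.2) ∈ ([(0,1),(0,2),(1,2)] : List (ℕ × ℕ)))
       ∨ (4 ≤ p.1.1 ∧ p.1.1 ≠ s ∧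
          (p.1.2, q.1.2) ∈ ([(0,1),(0,2),(0,3),(0,4),(1,2),(3,4)] : List (ℕ × ℕ))))
  | _, _ => False

/-- The gadget `F_{enc,s,k}(u,v,w;y₄,…,y_k)`. -/
def Fenc (k s : ℕ) : SimpleGraph (EV k s) := SimpleGraph.fromRel (encRel k s)

/-- `G` has a `K_m` minor, expressed via a minor model. -/
def HasCliqueMinor {V : Type*} (G : SimpleGraph V) (m : ℕ) : Prop :=
  ∃ μ : Fin m → Set V,
    (∀ i, (μ i).Nonempty ∧ (G.induce (μ i)).Connected) ∧
    (∀ i j, i ≠ j → Disjoint (μ i) (μ j)) ∧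
    (∀ i j, i ≠ j → ∃ a ∈ μ i, ∃ b ∈ μ j, G.Adj a b)

/-- The shared vertices `u, v, w, y₄, …, y_k` of the gadget. -/
def isShared {k s : ℕ} : EV k s → Prop
  | .inr (.inr _) => False
  | _ => True

/-- `F⁺_{enc,s,k}`: the gadget `F_{enc,s,k}` together with all edges of a
clique on `{u, v, w, y₄, …, y_k}`. -/
def FencPlus (k s : ℕ) : SimpleGraph (EV k s) :=
  SimpleGraph.fromRel (fun x y => encRel k s x y ∨ (isShared x ∧ isShared y))


open Classical

variable {k s : ℕ}

def iv (p : EncInt k s) : EV k s := Sum.inr (Sum.inr p)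

def evC (k s : ℕ) : EV k s → ℕ
  | .inl a => a.1
  | .inr (.inl y) => y.1
  | .inr (.inr _) => k + 1

lemma isShared_iv (p : EncInt k s) : ¬ isShared (iv p) := fun h => h

lemma not_shared_iff {x : EV k s} : ¬ isShared x ↔ ∃ p, x = iv p := by
  constructor
  · intro h
    rcases x with a | y | p
    · exact absurd trivial h
    · exact absurd trivial h
    · exact ⟨p, rfl⟩
  · rintro ⟨p, rfl⟩
    exact isShared_iv p

lemma fencPlus_adj {x y : EV k s} :
    (FencPlus k s).Adj x y ↔ x ≠ y ∧ (encRel k s x y ∨ encRel k s y x ∨ (isShared x ∧ isShared y)) := by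
  simp only [FencPlus, SimpleGraph.fromRel_adj]
  tauto

lemma encRel_iv_inl (p : EncInt k s) (a : Fin 3) : ¬ encRel k s (iv p) (Sum.inl a) := by
  simp [encRel, iv]

lemma encRel_iv_yv (p : EncInt k s) (y : Yk k) : ¬ encRel k s (iv p) (Sum.inr (Sum.inl y)) := by
  simp [encRel, iv]

lemma adj_inl_iv {a : Fin 3} {p : EncInt k s} :
    (FencPlus k s).Adj (Sum.inl a) (iv p) ↔ encRel k s (Sum.inl a) (iv p) := by
  refine fencPlus_adj.trans ?_
  have := isShared_iv (k := k) (s := s) p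
  have h2 := encRel_iv_inl p a
  constructor
  · rintro ⟨-, h | h | ⟨-, h⟩⟩
    · exact h
    · exact absurd h h2
    · exact absurd h this
  · intro h
    exact ⟨fun e => Sum.inl_ne_inr e, Or.inl h⟩

lemma adj_yv_iv {y : Yk k} {p : EncInt k s} :
    (FencPlus k s).Adj (Sum.inr (Sum.inl y)) (iv p) ↔ ¬(p.1.1 = y.1 ∧ p.1.2 = 0) := by
  refine fencPlus_adj.trans ?_
  constructor
  · rintro ⟨-, h | h | ⟨-, hs2⟩⟩
    · simpa [encRel, iv] using h
    · exact absurd h (encRel_iv_yv p y)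
    · exact absurd hs2 (isShared_iv p)
  · intro h
    refine ⟨fun hEq => Sum.inl_ne_inr (Sum.inr_injective hEq), Or.inl ?_⟩
    simpa [encRel, iv] using h

lemma adj_iv_iv {p q : EncInt k s} (h : (FencPlus k s).Adj (iv p) (iv q)) :
    encRel k s (iv p) (iv q) ∨ encRel k s (iv q) (iv p) := by
  rw [fencPlus_adj] at h
  have := isShared_iv (k := k) (s := s) p
  tauto

lemma piece_eq_of_encRel {p q : EncInt k s} (h : encRel k s (iv p) (iv q)) : p.1.1 = q.1.1 := by
  simpa [encRel, iv] using h.1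

lemma encRel_iv_iv_iff {p q : EncInt k s} :
    encRel k s (iv p) (iv q) ↔ p.1.1 = q.1.1 ∧
      ((p.1.1 = 1 ∧ ((p.1.2 = 0 ∧ q.1.2 = 1) ∨ (p.1.2 = 2 ∧ q.1.2 = 3)))
       ∨ (p.1.1 = s ∧ ((p.1.2 = 0 ∧ q.1.2 = 1) ∨ (p.1.2 = 0 ∧ q.1.2 = 2) ∨ (p.1.2 = 1 ∧ q.1.2 = 2)))
       ∨ (4 ≤ p.1.1 ∧ p.1.1 ≠ s ∧
          ((p.1.2 = 0 ∧ q.1.2 = 1) ∨ (p.1.2 = 0 ∧ q.1.2 = 2) ∨ (p.1.2 = 0 ∧ q.1.2 = 3)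
            ∨ (p.1.2 = 0 ∧ q.1.2 = 4) ∨ (p.1.2 = 1 ∧ q.1.2 = 2) ∨ (p.1.2 = 3 ∧ q.1.2 = 4)))) := by
  simp [encRel, iv, Prod.ext_iff]

lemma encRel_inl_iv_iff {a : Fin 3} {p : EncInt k s} :
    encRel k s (Sum.inl a) (iv p) ↔
      ((p.1.1 = 1 ∧ (a = 0 ∨ (a = 1 ∧ p.1.2 < 2) ∨ (a = 2 ∧ 2 ≤ p.1.2)))
      ∨ (p.1.1 = s ∧ ((a = 0 ∧ p.1.2 = 0) ∨ (a = 1 ∧ p.1.2 = 0) ∨ (a = 2 ∧ p.1.2 ≠ 0)))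
      ∨ (4 ≤ p.1.1 ∧ p.1.1 ≠ s ∧ ((a = 0 ∧ p.1.2 = 0) ∨ (a = 1 ∧ (p.1.2 = 1 ∨ p.1.2 = 2))
          ∨ (a = 2 ∧ (p.1.2 = 3 ∨ p.1.2 = 4))))) := Iff.rfl

lemma iv_inj {p q : EncInt k s} (h : iv p = iv q) : p = q :=
  Sum.inr_injective (Sum.inr_injective h)

lemma enc_ext {p q : EncInt k s} (h1 : p.1.1 = q.1.1) (h2 : p.1.2 = q.1.2) : p = q :=
  Subtype.ext (Prod.ext h1 h2)

lemma walk_ind {V : Type*} {G : SimpleGraph V} (P : V → Prop)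
    (hstep : ∀ ⦃x y⦄, G.Adj x y → P x → P y) :
    ∀ {x y}, G.Walk x y → P x → P y := by
  intro x y w
  induction w with
  | nil => exact id
  | cons h _ ih => exact fun hx => ih (hstep h hx)

lemma conn_invariant {V : Type*} {G : SimpleGraph V} {A : Set V}
    (hc : (G.induce A).Connected) (P : V → Prop)
    (hstep : ∀ x y, x ∈ A → y ∈ A → G.Adj x y → P x → P y)
    {x y : V} (hx : x ∈ A) (hy : y ∈ A) (hPx : P x) : P y := by
  obtain ⟨w⟩ := hc.preconnected ⟨x, hx⟩ ⟨y, hy⟩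
  exact walk_ind (G := G.induce A) (fun a => P a.1)
    (fun a b hab => hstep a b a.2 b.2 (by simpa using hab)) w hPx

lemma pigeon (hk : 4 ≤ k) (μ : Fin (k+2) → Set (EV k s))
    (hdisj : ∀ i j, i ≠ j → Disjoint (μ i) (μ j))
    (hadj : ∀ i j, i ≠ j → ∃ a ∈ μ i, ∃ b ∈ μ j, (FencPlus k s).Adj a b)
    (i j : Fin (k+2)) (hij : i ≠ j) (Tf : Finset ℕ) (hTcard : Tf.card ≤ k - 1)
    (hmem : ∀ z x, x ∈ μ i → z ∉ μ i → z ∉ μ j → (FencPlus k s).Adj z x → evC k s z ∈ Tf)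
    (hinj : ∀ z₁ z₂ x₁ x₂, x₁ ∈ μ i → x₂ ∈ μ i → z₁ ∉ μ i → z₁ ∉ μ j → z₂ ∉ μ i → z₂ ∉ μ j →
      (FencPlus k s).Adj z₁ x₁ → (FencPlus k s).Adj z₂ x₂ → evC k s z₁ = evC k s z₂ → z₁ = z₂) :
    False := by
  classical
  set T : Finset (Fin (k+2)) := (Finset.univ.erase i).erase j with hT
  have hTcard2 : T.card = k := by
    rw [hT, Finset.card_erase_of_mem (by simp [Finset.mem_erase, hij.symm]),
      Finset.card_erase_of_mem (Finset.mem_univ i)]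
    simp
  have hW : ∀ l ∈ T, ∃ a, a ∈ μ l ∧ a ∉ μ i ∧ a ∉ μ j ∧ ∃ x ∈ μ i, (FencPlus k s).Adj a x := by
    intro l hl
    rw [hT, Finset.mem_erase, Finset.mem_erase] at hl
    obtain ⟨a, ha, x, hx, haxadj⟩ := hadj l i hl.2.1
    exact ⟨a, ha, fun h => (hdisj l i hl.2.1).ne_of_mem ha h rfl,
      fun h => (hdisj l j hl.1).ne_of_mem ha h rfl, x, hx, haxadj⟩
  have key : T.card ≤ Tf.card := by
    apply Finset.card_le_card_of_injOn
      (fun l => if h : l ∈ T then evC k s (hW l h).choose else 0)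
    · intro l hl
      simp only [dif_pos (Finset.mem_coe.mp hl), Finset.mem_coe]
      obtain ⟨ha, hni, hnj, x, hx, hadjx⟩ := (hW l hl).choose_spec
      exact hmem _ _ hx hni hnj hadjx
    · intro l₁ hl₁ l₂ hl₂ heq
      simp only [Finset.mem_coe] at hl₁ hl₂
      simp only [dif_pos hl₁, dif_pos hl₂] at heq
      obtain ⟨ha₁, hni₁, hnj₁, x₁, hx₁, hadj₁⟩ := (hW l₁ hl₁).choose_spec
      obtain ⟨ha₂, hni₂, hnj₂, x₂, hx₂, hadj₂⟩ := (hW l₂ hl₂).choose_spec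
      have := hinj _ _ _ _ hx₁ hx₂ hni₁ hnj₁ hni₂ hnj₂ hadj₁ hadj₂ heq
      by_contra hne
      exact (hdisj l₁ l₂ hne).ne_of_mem ha₁ (this ▸ ha₂) rfl
  omega

lemma evC_shared_mem (hk : 4 ≤ k) {x : EV k s} (hx : isShared x) :
    evC k s x ∈ ({0, 1, 2} : Finset ℕ) ∪ Finset.Icc 4 k := by
  rcases x with a | y | p
  · have := a.2
    simp only [evC, Finset.mem_union, Finset.mem_insert, Finset.mem_singleton, Finset.mem_Icc]
    omega
  · have := y.2
    simp only [evC, Finset.mem_union, Finset.mem_insert, Finset.mem_singleton, Finset.mem_Icc]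
    omega
  · exact absurd hx (isShared_iv p)

lemma evC_inj_shared {x₁ x₂ : EV k s} (h1 : isShared x₁) (h2 : isShared x₂)
    (h : evC k s x₁ = evC k s x₂) : x₁ = x₂ := by
  rcases x₁ with a | y | p
  · rcases x₂ with b | z | q
    · simp only [evC] at h
      exact congrArg Sum.inl (Fin.ext h)
    · have := a.2; have := z.2; simp only [evC] at h; omega
    · exact absurd h2 (isShared_iv q)
  · rcases x₂ with b | z | q
    · have := y.2; have := b.2; simp only [evC] at h; omega
    · simp only [evC] at h
      exact congrArg (Sum.inr ∘ Sum.inl) (Subtype.ext h)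
    · exact absurd h2 (isShared_iv q)
  · exact absurd h1 (isShared_iv p)

lemma step1 (hk : 4 ≤ k) (μ : Fin (k+2) → Set (EV k s))
    (hdisj : ∀ i j, i ≠ j → Disjoint (μ i) (μ j)) :
    ∃ i j, i ≠ j ∧ (∀ x ∈ μ i, ¬ isShared x) ∧ (∀ x ∈ μ j, ¬ isShared x) := by
  classical
  set D : Finset (Fin (k+2)) := Finset.univ.filter (fun i => ∃ x, x ∈ μ i ∧ isShared x) with hD
  have hDmem : ∀ l ∈ D, ∃ x, x ∈ μ l ∧ isShared x := by
    intro l hl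
    rw [hD, Finset.mem_filter] at hl
    exact hl.2
  have hDcard : D.card ≤ k := by
    have : D.card ≤ (({0, 1, 2} : Finset ℕ) ∪ Finset.Icc 4 k).card := by
      apply Finset.card_le_card_of_injOn
        (fun l => if h : l ∈ D then evC k s (hDmem l h).choose else 0)
      · intro l hl
        simp only [dif_pos (Finset.mem_coe.mp hl), Finset.mem_coe]
        exact evC_shared_mem hk (hDmem l hl).choose_spec.2
      · intro l₁ hl₁ l₂ hl₂ heq
        simp only [Finset.mem_coe] at hl₁ hl₂
        simp only [dif_pos hl₁, dif_pos hl₂] at heq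
        have := evC_inj_shared (hDmem l₁ hl₁).choose_spec.2 (hDmem l₂ hl₂).choose_spec.2 heq
        by_contra hne
        exact (hdisj l₁ l₂ hne).ne_of_mem (hDmem l₁ hl₁).choose_spec.1
          (this ▸ (hDmem l₂ hl₂).choose_spec.1) rfl
    have h2 : (({0, 1, 2} : Finset ℕ) ∪ Finset.Icc 4 k).card ≤ 3 + (k - 3) := by
      refine le_trans (Finset.card_union_le _ _) ?_
      have : ({0, 1, 2} : Finset ℕ).card ≤ 3 := by decide
      have h3 : (Finset.Icc 4 k).card = k - 3 := by rw [Nat.card_Icc]; omega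
      omega
    omega
  have hcompl : 1 < (Finset.univ \ D).card := by
    have := Finset.card_sdiff_add_card_eq_card (Finset.subset_univ D)
    have huniv : (Finset.univ : Finset (Fin (k+2))).card = k + 2 := by simp
    omega
  obtain ⟨i, hi, j, hj, hij⟩ := Finset.one_lt_card.mp hcompl
  have hmemi : ∀ l ∈ Finset.univ \ D, ∀ x ∈ μ l, ¬ isShared x := by
    intro l hl x hx hsx
    rw [Finset.mem_sdiff, hD, Finset.mem_filter] at hl
    exact hl.2 ⟨Finset.mem_univ l, x, hx, hsx⟩
  exact ⟨i, j, hij, hmemi i hi, hmemi j hj⟩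

lemma card_aux1 (hk : 4 ≤ k) (c₁ c₂ : ℕ) (h1 : c₁ < 3) (h2 : c₂ < 3) :
    (({c₁, c₂} : Finset ℕ) ∪ Finset.Icc 4 k).card ≤ k - 1 := by
  refine le_trans (Finset.card_union_le _ _) ?_
  have : ({c₁, c₂} : Finset ℕ).card ≤ 2 := Finset.card_insert_le _ _ |>.trans (by simp)
  have h3 : (Finset.Icc 4 k).card = k - 3 := by rw [Nat.card_Icc]; omega
  omega

lemma card_aux2 (hk : 4 ≤ k) (c : ℕ) (h1 : c < 3) :
    (({c} : Finset ℕ) ∪ Finset.Icc 4 k ∪ {k + 1}).card ≤ k - 1 := by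
  refine le_trans (Finset.card_union_le _ _) ?_
  refine le_trans (by exact Nat.add_le_add_right (Finset.card_union_le _ _) _) ?_
  have h3 : (Finset.Icc 4 k).card = k - 3 := by rw [Nat.card_Icc]; omega
  simp only [Finset.card_singleton]
  omega

lemma evC_y_mem {y : Yk k} : evC k s (Sum.inr (Sum.inl y)) ∈ Finset.Icc 4 k := by
  have := y.2; simp only [evC, Finset.mem_Icc]; omega

lemma engine2 (hk : 4 ≤ k)
    (μ : Fin (k+2) → Set (EV k s))
    (hdisj : ∀ i j, i ≠ j → Disjoint (μ i) (μ j))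
    (hadj : ∀ i j, i ≠ j → ∃ a ∈ μ i, ∃ b ∈ μ j, (FencPlus k s).Adj a b)
    (i j : Fin (k+2)) (hij : i ≠ j)
    (hXint : ∀ x ∈ μ i, ¬ isShared x)
    (c : ℕ) (hc : c < 3)
    (hshared : ∀ (a : Fin 3) (p : EncInt k s), iv p ∈ μ i →
        (FencPlus k s).Adj (Sum.inl a) (iv p) → (a : ℕ) = c)
    (huniq : ∀ q₁ q₂ p₁ p₂ : EncInt k s, iv p₁ ∈ μ i → iv p₂ ∈ μ i →
        (FencPlus k s).Adj (iv q₁) (iv p₁) → (FencPlus k s).Adj (iv q₂) (iv p₂) →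
        iv q₁ ∉ μ i → iv q₁ ∉ μ j → iv q₂ ∉ μ i → iv q₂ ∉ μ j → q₁ = q₂) : False := by
  refine pigeon hk μ hdisj hadj i j hij (({c} : Finset ℕ) ∪ Finset.Icc 4 k ∪ {k + 1})
    (card_aux2 hk c hc) ?_ ?_
  · intro z x hx hzi hzj hzx
    obtain ⟨p, rfl⟩ := not_shared_iff.mp (hXint x hx)
    rcases z with a | y | q
    · have := hshared a p hx hzx
      simp only [evC, this, Finset.mem_union, Finset.mem_singleton]
      tauto
    · simp only [Finset.mem_union]
      exact Or.inl (Or.inr evC_y_mem)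
    · simp only [evC, Finset.mem_union, Finset.mem_singleton]
      tauto
  · intro z₁ z₂ x₁ x₂ hx₁ hx₂ hz₁i hz₁j hz₂i hz₂j hadj₁ hadj₂ heq
    obtain ⟨p₁, rfl⟩ := not_shared_iff.mp (hXint x₁ hx₁)
    obtain ⟨p₂, rfl⟩ := not_shared_iff.mp (hXint x₂ hx₂)
    rcases z₁ with a | y | q <;> rcases z₂ with b | w | q'
    · exact evC_inj_shared trivial trivial heq
    · exact evC_inj_shared trivial trivial heq
    · have := a.2; simp only [evC] at heq; omega
    · exact evC_inj_shared trivial trivial heq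
    · exact evC_inj_shared trivial trivial heq
    · have := y.2; simp only [evC] at heq; omega
    · have := b.2; simp only [evC] at heq; omega
    · have := w.2; simp only [evC] at heq; omega
    · exact congrArg iv (huniq q q' p₁ p₂ hx₁ hx₂ hadj₁ hadj₂ hz₁i hz₁j hz₂i hz₂j)

lemma engine1 (hk : 4 ≤ k)
    (μ : Fin (k+2) → Set (EV k s))
    (hdisj : ∀ i j, i ≠ j → Disjoint (μ i) (μ j))
    (hadj : ∀ i j, i ≠ j → ∃ a ∈ μ i, ∃ b ∈ μ j, (FencPlus k s).Adj a b)
    (i j : Fin (k+2)) (hij : i ≠ j)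
    (hXint : ∀ x ∈ μ i, ¬ isShared x)
    (c₁ c₂ : ℕ) (hc1 : c₁ < 3) (hc2 : c₂ < 3)
    (hshared : ∀ (a : Fin 3) (p : EncInt k s), iv p ∈ μ i →
        (FencPlus k s).Adj (Sum.inl a) (iv p) → (a : ℕ) = c₁ ∨ (a : ℕ) = c₂)
    (hnoint : ∀ q p : EncInt k s, iv p ∈ μ i →
        (FencPlus k s).Adj (iv q) (iv p) →
        iv q ∉ μ i → iv q ∉ μ j → False) : False := by
  refine pigeon hk μ hdisj hadj i j hij (({c₁, c₂} : Finset ℕ) ∪ Finset.Icc 4 k)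
    (card_aux1 hk c₁ c₂ hc1 hc2) ?_ ?_
  · intro z x hx hzi hzj hzx
    obtain ⟨p, rfl⟩ := not_shared_iff.mp (hXint x hx)
    rcases z with a | y | q
    · have := hshared a p hx hzx
      simp only [evC, Finset.mem_union, Finset.mem_insert, Finset.mem_singleton]
      tauto
    · simp only [Finset.mem_union]
      exact Or.inr evC_y_mem
    · exact (hnoint q p hx hzx hzi hzj).elim
  · intro z₁ z₂ x₁ x₂ hx₁ hx₂ hz₁i hz₁j hz₂i hz₂j hadj₁ hadj₂ heq
    obtain ⟨p₁, rfl⟩ := not_shared_iff.mp (hXint x₁ hx₁)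
    obtain ⟨p₂, rfl⟩ := not_shared_iff.mp (hXint x₂ hx₂)
    rcases z₁ with a | y | q
    case inr.inr => exact (hnoint q p₁ hx₁ hadj₁ hz₁i hz₁j).elim
    all_goals rcases z₂ with b | w | q'
    · exact evC_inj_shared trivial trivial heq
    · exact evC_inj_shared trivial trivial heq
    · exact (hnoint q' p₂ hx₂ hadj₂ hz₂i hz₂j).elim
    · exact evC_inj_shared trivial trivial heq
    · exact evC_inj_shared trivial trivial heq
    · exact (hnoint q' p₂ hx₂ hadj₂ hz₂i hz₂j).elim

/-- numeric content of an internal-internal adjacency -/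
def pairNum (s r a b : ℕ) : Prop :=
  (r = 1 ∧ ((a = 0 ∧ b = 1) ∨ (a = 2 ∧ b = 3)))
  ∨ (r = s ∧ ((a = 0 ∧ b = 1) ∨ (a = 0 ∧ b = 2) ∨ (a = 1 ∧ b = 2)))
  ∨ (4 ≤ r ∧ r ≠ s ∧ ((a = 0 ∧ b = 1) ∨ (a = 0 ∧ b = 2) ∨ (a = 0 ∧ b = 3)
      ∨ (a = 0 ∧ b = 4) ∨ (a = 1 ∧ b = 2) ∨ (a = 3 ∧ b = 4)))

lemma adj_iv_iv_num {p q : EncInt k s} (h : (FencPlus k s).Adj (iv p) (iv q)) :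
    p.1.1 = q.1.1 ∧ (pairNum s p.1.1 p.1.2 q.1.2 ∨ pairNum s p.1.1 q.1.2 p.1.2) := by
  rcases adj_iv_iv h with h' | h'
  · rw [encRel_iv_iv_iff] at h'
    exact ⟨h'.1, Or.inl (by simpa [pairNum] using h'.2)⟩
  · rw [encRel_iv_iv_iff] at h'
    refine ⟨h'.1.symm, Or.inr ?_⟩
    have := h'.2
    rw [h'.1] at this
    simpa [pairNum] using this

lemma adj_inl_iv_num {a : Fin 3} {p : EncInt k s} (h : (FencPlus k s).Adj (Sum.inl a) (iv p)) :
    (p.1.1 = 1 ∧ ((a:ℕ) = 0 ∨ ((a:ℕ) = 1 ∧ p.1.2 < 2) ∨ ((a:ℕ) = 2 ∧ 2 ≤ p.1.2)))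
    ∨ (p.1.1 = s ∧ (((a:ℕ) = 0 ∧ p.1.2 = 0) ∨ ((a:ℕ) = 1 ∧ p.1.2 = 0) ∨ ((a:ℕ) = 2 ∧ p.1.2 ≠ 0)))
    ∨ (4 ≤ p.1.1 ∧ p.1.1 ≠ s ∧ (((a:ℕ) = 0 ∧ p.1.2 = 0) ∨ ((a:ℕ) = 1 ∧ (p.1.2 = 1 ∨ p.1.2 = 2))
        ∨ ((a:ℕ) = 2 ∧ (p.1.2 = 3 ∨ p.1.2 = 4)))) := by
  rw [adj_inl_iv, encRel_inl_iv_iff] at h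
  simp only [Fin.ext_iff, Fin.val_zero, Fin.val_one, Fin.val_two] at h; exact h

lemma piece_const {A : Set (EV k s)} (hc : ((FencPlus k s).induce A).Connected)
    (hint : ∀ x ∈ A, ¬ isShared x) {p₀ : EncInt k s} (hp₀ : iv p₀ ∈ A) :
    ∀ x ∈ A, ∃ p, x = iv p ∧ p.1.1 = p₀.1.1 := by
  intro x hx
  refine conn_invariant hc (fun z => ∃ p, z = iv p ∧ p.1.1 = p₀.1.1) ?_ hp₀ hx ⟨p₀, rfl, rfl⟩
  rintro z w hz hw hzw ⟨p, rfl, hp⟩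
  obtain ⟨q, rfl⟩ := not_shared_iff.mp (hint w hw)
  exact ⟨q, rfl, ((adj_iv_iv_num hzw).1).symm.trans hp⟩

lemma pos_const {A : Set (EV k s)} (hc : ((FencPlus k s).induce A).Connected)
    (hint : ∀ x ∈ A, ¬ isShared x) (Q : ℕ → Prop)
    (hQ : ∀ p q : EncInt k s, iv p ∈ A → iv q ∈ A → (FencPlus k s).Adj (iv p) (iv q) →
        Q p.1.2 → Q q.1.2)
    {p₀ : EncInt k s} (hp₀ : iv p₀ ∈ A) (hQ₀ : Q p₀.1.2) :
    ∀ x ∈ A, ∃ p, x = iv p ∧ Q p.1.2 := by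
  intro x hx
  refine conn_invariant hc (fun z => ∃ p, z = iv p ∧ Q p.1.2) ?_ hp₀ hx ⟨p₀, rfl, hQ₀⟩
  rintro z w hz hw hzw ⟨p, rfl, hp⟩
  obtain ⟨q, rfl⟩ := not_shared_iff.mp (hint w hw)
  exact ⟨q, rfl, hQ p q hz hw hzw hp⟩


set_option maxHeartbeats 2000000 in
lemma caseB (hk : 4 ≤ k) (hs4 : 4 ≤ s) (hsk : s ≤ k)
    (μ : Fin (k+2) → Set (EV k s))
    (hconn : ∀ l, (μ l).Nonempty ∧ ((FencPlus k s).induce (μ l)).Connected)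
    (hdisj : ∀ l m, l ≠ m → Disjoint (μ l) (μ m))
    (hadj : ∀ l m, l ≠ m → ∃ a ∈ μ l, ∃ b ∈ μ m, (FencPlus k s).Adj a b)
    (i j : Fin (k+2)) (hij : i ≠ j)
    (hAsh : ∀ x ∈ μ i, ¬ isShared x) (hBsh : ∀ x ∈ μ j, ¬ isShared x)
    (pa pb : EncInt k s) (ha : iv pa ∈ μ i) (hb : iv pb ∈ μ j)
    (hr4 : 4 ≤ pa.1.1) (hrk : pa.1.1 ≤ k)
    (hpieceB : pb.1.1 = pa.1.1)
    (hnum : pairNum s pa.1.1 pa.1.2 pb.1.2 ∨ pairNum s pa.1.1 pb.1.2 pa.1.2)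
    (hApN : ∀ p : EncInt k s, iv p ∈ μ i → p.1.1 = pa.1.1)
    (q0 : EncInt k s) (hq01 : q0.1.1 = pa.1.1) (hq02 : q0.1.2 = 0)
    (h0A : iv q0 ∉ μ i) : False := by
  have hpa0 : pa.1.2 ≠ 0 := by
    intro h
    exact h0A (by rw [enc_ext hq01 (hq02.trans h.symm)]; exact ha)
  have hXQ : ∀ p : EncInt k s, iv p ∈ μ i →
      (p.1.2 ≠ 0 ∧ (pa.1.2 ≤ 2 → p.1.2 ≤ 2) ∧ (3 ≤ pa.1.2 → 3 ≤ p.1.2)) := by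
    intro p hp
    have hstep : ∀ p q : EncInt k s, iv p ∈ μ i → iv q ∈ μ i →
        (FencPlus k s).Adj (iv p) (iv q) →
        (p.1.2 ≠ 0 ∧ (pa.1.2 ≤ 2 → p.1.2 ≤ 2) ∧ (3 ≤ pa.1.2 → 3 ≤ p.1.2)) →
        (q.1.2 ≠ 0 ∧ (pa.1.2 ≤ 2 → q.1.2 ≤ 2) ∧ (3 ≤ pa.1.2 → 3 ≤ q.1.2)) := by
      intro p q hpA hqA hpq hQ
      have h1 := hApN p hpA
      have h2 := hApN q hqA
      have hq0 : q.1.2 ≠ 0 := by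
        intro hzero
        exact h0A (by rw [enc_ext (hq01.trans h2.symm) (hq02.trans hzero.symm)]; exact hqA)
      have h := (adj_iv_iv_num hpq).2
      have hr4' : 4 ≤ p.1.1 := by omega
      have hsmall : q.1.2 = 0 ∨ (q.1.2 + p.1.2 = 3 ∧ q.1.2 ≤ 2 ∧ p.1.2 ≤ 2)
          ∨ (q.1.2 + p.1.2 = 7 ∧ 3 ≤ q.1.2 ∧ q.1.2 ≤ 4 ∧ 3 ≤ p.1.2) := by
        simp only [pairNum] at h
        omega
      omega
    obtain ⟨p', he, hq⟩ := pos_const (hconn i).2 hAsh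
      (Q := fun m => m ≠ 0 ∧ (pa.1.2 ≤ 2 → m ≤ 2) ∧ (3 ≤ pa.1.2 → 3 ≤ m))
      hstep ha ⟨hpa0, fun h => h, fun h => h⟩ (iv p) hp
    rw [iv_inj he]; exact hq
  have huniq : ∀ q₁ q₂ p₁ p₂ : EncInt k s, iv p₁ ∈ μ i → iv p₂ ∈ μ i →
      (FencPlus k s).Adj (iv q₁) (iv p₁) → (FencPlus k s).Adj (iv q₂) (iv p₂) →
      iv q₁ ∉ μ i → iv q₁ ∉ μ j → iv q₂ ∉ μ i → iv q₂ ∉ μ j → q₁ = q₂ := by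
    intro q₁ q₂ p₁ p₂ hp₁ hp₂ hadj₁ hadj₂ hq₁i hq₁j hq₂i hq₂j
    have h1 := hApN p₁ hp₁
    have h2 := hApN p₂ hp₂
    have hq11 : q₁.1.1 = pa.1.1 := (adj_iv_iv_num hadj₁).1.trans h1
    have hq21 : q₂.1.1 = pa.1.1 := (adj_iv_iv_num hadj₂).1.trans h2
    have hne1a : q₁.1.2 ≠ pa.1.2 := fun hh => hq₁i (by rw [enc_ext hq11 hh]; exact ha)
    have hne1b : q₁.1.2 ≠ pb.1.2 := fun hh =>
      hq₁j (by rw [enc_ext (hq11.trans hpieceB.symm) hh]; exact hb)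
    have hne2a : q₂.1.2 ≠ pa.1.2 := fun hh => hq₂i (by rw [enc_ext hq21 hh]; exact ha)
    have hne2b : q₂.1.2 ≠ pb.1.2 := fun hh =>
      hq₂j (by rw [enc_ext (hq21.trans hpieceB.symm) hh]; exact hb)
    refine enc_ext (hq11.trans hq21.symm) ?_
    have ha1 := (adj_iv_iv_num hadj₁).2
    have ha2 := (adj_iv_iv_num hadj₂).2
    have hX1 := hXQ p₁ hp₁
    have hX2 := hXQ p₂ hp₂
    have hsmall1 : q₁.1.2 = 0 ∨ (q₁.1.2 + p₁.1.2 = 3 ∧ q₁.1.2 ≤ 2 ∧ p₁.1.2 ≤ 2)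
        ∨ (q₁.1.2 + p₁.1.2 = 7 ∧ 3 ≤ q₁.1.2 ∧ q₁.1.2 ≤ 4 ∧ 3 ≤ p₁.1.2) := by
      have : 4 ≤ q₁.1.1 := by omega
      have hX := hX1.1
      simp only [pairNum] at ha1
      omega
    have hsmall2 : q₂.1.2 = 0 ∨ (q₂.1.2 + p₂.1.2 = 3 ∧ q₂.1.2 ≤ 2 ∧ p₂.1.2 ≤ 2)
        ∨ (q₂.1.2 + p₂.1.2 = 7 ∧ 3 ≤ q₂.1.2 ∧ q₂.1.2 ≤ 4 ∧ 3 ≤ p₂.1.2) := by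
      have : 4 ≤ q₂.1.1 := by omega
      have hX := hX2.1
      simp only [pairNum] at ha2
      omega
    have hsmallAB : pb.1.2 = 0 ∨ (pa.1.2 + pb.1.2 = 3 ∧ pa.1.2 ≤ 2 ∧ pb.1.2 ≤ 2)
        ∨ (pa.1.2 + pb.1.2 = 7 ∧ 3 ≤ pa.1.2 ∧ 3 ≤ pb.1.2 ∧ pb.1.2 ≤ 4) := by
      have hnum' := hnum
      simp only [pairNum] at hnum'
      omega
    have h1' := hX1.2
    have h2' := hX2.2
    have hpa4 : pa.1.2 ≤ 4 := by have := pa.2; omega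
    have hpb4 : pb.1.2 ≤ 4 := by have := pb.2; omega
    omega
  by_cases hcs : pa.1.1 ≠ s ∧ pa.1.2 ≤ 2
  · refine engine2 hk μ hdisj hadj i j hij hAsh 1 (by norm_num) ?_ huniq
    intro a p hp hadjp
    have h := adj_inl_iv_num hadjp
    have h1 := hApN p hp
    have hX := hXQ p hp
    have hpP := p.2; have hpaP := pa.2
    omega
  · refine engine2 hk μ hdisj hadj i j hij hAsh 2 (by norm_num) ?_ huniq
    intro a p hp hadjp
    have h := adj_inl_iv_num hadjp
    have h1 := hApN p hp
    have hX := hXQ p hp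
    have hpP := p.2; have hpaP := pa.2
    have hcs' : pa.1.1 = s ∨ 3 ≤ pa.1.2 := by
      rcases Classical.em (pa.1.1 = s) with h' | h'
      · exact Or.inl h'
      · exact Or.inr (by omega)
    omega

theorem FencPlus_km_minor_free (k s : ℕ) (hk : 4 ≤ k) (hs : 4 ≤ s ∧ s ≤ k) :
    ¬ HasCliqueMinor (FencPlus k s) (k+2) := by
  obtain ⟨hs4, hsk⟩ := hs
  rintro ⟨μ, hconn, hdisj, hadj⟩
  obtain ⟨i, j, hij, hAsh, hBsh⟩ := step1 hk μ hdisj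
  obtain ⟨a, ha, b, hb, hab⟩ := hadj i j hij
  obtain ⟨pa, rfl⟩ := not_shared_iff.mp (hAsh a ha)
  obtain ⟨pb, rfl⟩ := not_shared_iff.mp (hBsh b hb)
  have hpieceB : pb.1.1 = pa.1.1 := (adj_iv_iv_num hab).1.symm
  have hnum := (adj_iv_iv_num hab).2
  have hApN : ∀ p : EncInt k s, iv p ∈ μ i → p.1.1 = pa.1.1 := by
    intro p hp
    obtain ⟨p', he, hpc⟩ := piece_const (hconn i).2 hAsh ha (iv p) hp
    rw [iv_inj he]; exact hpc
  have hBpN : ∀ p : EncInt k s, iv p ∈ μ j → p.1.1 = pa.1.1 := by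
    intro p hp
    obtain ⟨p', he, hpc⟩ := piece_const (hconn j).2 hBsh hb (iv p) hp
    rw [iv_inj he]; exact hpc.trans hpieceB
  rcases pa.2 with ⟨hr1, -⟩ | ⟨hr4, hrk, -⟩
  · -- piece F₁
    have hposAB : (pa.1.2 < 2 ∧ pb.1.2 < 2 ∧ pa.1.2 + pb.1.2 = 1)
        ∨ (2 ≤ pa.1.2 ∧ 2 ≤ pb.1.2 ∧ pa.1.2 + pb.1.2 = 5) := by
      have h := hnum
      have hpaP := pa.2; have hpbP := pb.2
      simp only [pairNum] at h
      omega
    have hAQ : ∀ p : EncInt k s, iv p ∈ μ i →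
        ((pa.1.2 < 2 → p.1.2 < 2) ∧ (2 ≤ pa.1.2 → 2 ≤ p.1.2)) := by
      intro p hp
      have hstep : ∀ p q : EncInt k s, iv p ∈ μ i → iv q ∈ μ i →
          (FencPlus k s).Adj (iv p) (iv q) →
          ((pa.1.2 < 2 → p.1.2 < 2) ∧ (2 ≤ pa.1.2 → 2 ≤ p.1.2)) →
          ((pa.1.2 < 2 → q.1.2 < 2) ∧ (2 ≤ pa.1.2 → 2 ≤ q.1.2)) := by
        intro p q hpA hqA hpq hQ
        have h1 := hApN p hpA
        have h := (adj_iv_iv_num hpq).2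
        simp only [pairNum] at h
        omega
      obtain ⟨p', he, hq⟩ := pos_const (hconn i).2 hAsh
          (Q := fun m => (pa.1.2 < 2 → m < 2) ∧ (2 ≤ pa.1.2 → 2 ≤ m))
          hstep ha ⟨fun h => h, fun h => h⟩ (iv p) hp
      rw [iv_inj he]; exact hq
    rcases hposAB with ⟨hpa2, hpb2, hsum⟩ | ⟨hpa2, hpb2, hsum⟩
    · refine engine1 hk μ hdisj hadj i j hij hAsh 0 1 (by norm_num) (by norm_num) ?_ ?_
      · intro a p hp hadjp
        have h := adj_inl_iv_num hadjp
        have h1 := hApN p hp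
        have h2 := (hAQ p hp).1 hpa2
        omega
      · intro q p hp hadjp hqi hqj
        have h1 := hApN p hp
        have h2 := (hAQ p hp).1 hpa2
        have h := adj_iv_iv_num hadjp
        have hq1 : q.1.1 = pa.1.1 := h.1.trans h1
        have hqpos : q.1.2 = pa.1.2 ∨ q.1.2 = pb.1.2 := by
          have h' := h.2
          simp only [pairNum] at h'
          omega
        rcases hqpos with hqq | hqq
        · exact hqi (by rw [enc_ext hq1 hqq]; exact ha)
        · exact hqj (by rw [enc_ext (hq1.trans hpieceB.symm) hqq]; exact hb)
    · refine engine1 hk μ hdisj hadj i j hij hAsh 0 2 (by norm_num) (by norm_num) ?_ ?_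
      · intro a p hp hadjp
        have h := adj_inl_iv_num hadjp
        have h1 := hApN p hp
        have h2 := (hAQ p hp).2 hpa2
        omega
      · intro q p hp hadjp hqi hqj
        have h1 := hApN p hp
        have h2 := (hAQ p hp).2 hpa2
        have h := adj_iv_iv_num hadjp
        have hq1 : q.1.1 = pa.1.1 := h.1.trans h1
        have hqpos : q.1.2 = pa.1.2 ∨ q.1.2 = pb.1.2 := by
          have h' := h.2
          have hpaP := pa.2; have hpbP := pb.2; have hqP := q.2; have hpP := p.2
          simp only [pairNum] at h'
          omega
        rcases hqpos with hqq | hqq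
        · exact hqi (by rw [enc_ext hq1 hqq]; exact ha)
        · exact hqj (by rw [enc_ext (hq1.trans hpieceB.symm) hqq]; exact hb)
  · -- pieces F_s and F_r, r ≠ s
    have hq0prop : ((pa.1.1 : ℕ) = 1 ∧ (0:ℕ) < 4) ∨ (4 ≤ pa.1.1 ∧ pa.1.1 ≤ k ∧
        ((pa.1.1 = s ∧ (0:ℕ) < 3) ∨ (pa.1.1 ≠ s ∧ (0:ℕ) < 5))) := by
      rcases Classical.em (pa.1.1 = s) with h | h
      · exact Or.inr ⟨hr4, hrk, Or.inl ⟨h, by norm_num⟩⟩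
      · exact Or.inr ⟨hr4, hrk, Or.inr ⟨h, by norm_num⟩⟩
    by_cases h0 : iv (⟨(pa.1.1, 0), hq0prop⟩ : EncInt k s) ∈ μ i
    · exact caseB hk hs4 hsk μ hconn hdisj hadj j i hij.symm hBsh hAsh pb pa hb ha
        (by rw [hpieceB]; exact hr4) (by rw [hpieceB]; exact hrk) hpieceB.symm
        (by rw [hpieceB]; exact hnum.symm)
        (fun p hp => (hBpN p hp).trans hpieceB.symm)
        ⟨(pa.1.1, 0), hq0prop⟩ hpieceB.symm rfl
        (fun hh => (hdisj i j hij).ne_of_mem h0 hh rfl)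
    · exact caseB hk hs4 hsk μ hconn hdisj hadj i j hij hAsh hBsh pa pb ha hb
        hr4 hrk hpieceB hnum hApN ⟨(pa.1.1, 0), hq0prop⟩ rfl rfl h0
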